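/- Let 𝔰 be a solvable complex Lie algebra in the canonical form for a Heisenberg nilradical 𝔥(m) with f-dimensional extension. Then its characteristic polynomial with respect to the canonical basis is Q_𝔰(z) = z₀^f · (z₀ + Σ_{α=1}^{f} 2a_α·z_{f_α}) · det(z₀·I_{2m} + Σ_{α=1}^{f} z_{f_α}·(a_α·I_{2m} + X_α)). -/

import Mathlib

/-- The characteristic polynomial `Q_L(z₀, …, z_N) = det (z₀ I + z₁ ad x₁ + ⋯ + z_N ad x_N)`
of an `N`-dimensional complex Lie algebra with ordered basis `(x₁, …, x_N)`; the variable of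
index `0` is `z₀` and the variable of index `k.succ` is attached to the basis vector `x_k`. -/
noncomputable def lieCharPoly (N : ℕ) (L : Type) [LieRing L] [LieAlgebra ℂ L]
    (b : Module.Basis (Fin N) ℂ L) : MvPolynomial (Fin (N + 1)) ℂ :=
  Matrix.det
    ((MvPolynomial.X 0 : MvPolynomial (Fin (N + 1)) ℂ) •
        (1 : Matrix (Fin N) (Fin N) (MvPolynomial (Fin (N + 1)) ℂ)) +
      ∑ k : Fin N,
        (MvPolynomial.X k.succ : MvPolynomial (Fin (N + 1)) ℂ) •
          ((LinearMap.toMatrix b b (LieAlgebra.ad ℂ L (b k))).map (MvPolynomial.C)))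

/-- `k(Q)`: the number of distinct irreducible factors of `Q` up to scalar multiples, i.e. the
cardinality of the set of associate classes of irreducible polynomials dividing `Q`. -/
noncomputable def numIrreducibleFactors {σ : Type} (Q : MvPolynomial σ ℂ) : ℕ :=
  {a : Associates (MvPolynomial σ ℂ) | Irreducible a ∧ a ∣ Associates.mk Q}.ncard

/-- The index of the central element `h` in the canonical basis
`(h, p₁, …, p_m, q₁, …, q_m, f₁, …, f_f)`. -/
def idxH (m f : ℕ) : Fin (2 * m + 1 + f) := ⟨0, by omega⟩

/-- The index of `p_i` in the canonical basis. -/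
def idxP (m f : ℕ) (i : Fin m) : Fin (2 * m + 1 + f) := ⟨1 + i.val, by have := i.isLt; omega⟩

/-- The index of `q_i` in the canonical basis. -/
def idxQ (m f : ℕ) (i : Fin m) : Fin (2 * m + 1 + f) :=
  ⟨1 + m + i.val, by have := i.isLt; omega⟩

/-- The index of `ξ_i` in the canonical basis, where `ξ = (p₁, …, p_m, q₁, …, q_m)`. -/
def idxXi (m f : ℕ) (i : Fin (2 * m)) : Fin (2 * m + 1 + f) :=
  ⟨1 + i.val, by have := i.isLt; omega⟩

/-- The index of the extension element `f_α` in the canonical basis. -/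
def idxF (m f : ℕ) (α : Fin f) : Fin (2 * m + 1 + f) :=
  ⟨2 * m + 1 + α.val, by have := α.isLt; omega⟩

/-- The canonical symplectic structure matrix `J` on `ℂ^{2m}` (with respect to the ordering
`(p₁, …, p_m, q₁, …, q_m)`), so that `𝔰𝔭(2m, ℂ) = {X | Xᵀ J + J X = 0}`. -/
def symplJ (m : ℕ) : Matrix (Fin (2 * m)) (Fin (2 * m)) ℂ :=
  Matrix.of fun i j =>
    if i.val < m ∧ j.val = i.val + m then 1
    else if j.val < m ∧ i.val = j.val + m then -1 else 0


/-- The block equivalence `Fin 1 ⊕ (Fin (2m) ⊕ Fin f) ≃ Fin (2m+1+f)`. -/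
def bigEquiv (m f : ℕ) : (Fin 1 ⊕ (Fin (2 * m) ⊕ Fin f)) ≃ Fin (2 * m + 1 + f) where
  toFun := Sum.elim (fun _ => idxH m f) (Sum.elim (idxXi m f) (idxF m f))
  invFun i :=
    if h0 : i.val = 0 then Sum.inl 0
    else if h2 : i.val < 2 * m + 1 then Sum.inr (Sum.inl ⟨i.val - 1, by omega⟩)
    else Sum.inr (Sum.inr ⟨i.val - (2 * m + 1), by have := i.isLt; omega⟩)
  left_inv s := by
    rcases s with x | i | α
    · simp only [Sum.elim_inl, idxH, dif_pos rfl]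
      exact congrArg Sum.inl (Subsingleton.elim _ _)
    · simp only [Sum.elim_inr, Sum.elim_inl, idxXi]
      simp only [show ¬ (1 + i.val = 0) by omega,
        show 1 + i.val < 2 * m + 1 by have := i.isLt; omega, ↓reduceDIte]
      simp [Fin.ext_iff]
    · simp only [Sum.elim_inr, idxF]
      simp only [show ¬ (2 * m + 1 + α.val = 0) by omega,
        show ¬ (2 * m + 1 + α.val < 2 * m + 1) by omega, ↓reduceDIte]
      simp [Fin.ext_iff]
  right_inv i := by
    dsimp only
    by_cases h0 : i.val = 0
    · rw [dif_pos h0]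
      exact Fin.ext (by simp [idxH]; omega)
    · by_cases h1 : i.val < 2 * m + 1
      · rw [dif_neg h0, dif_pos h1]
        exact Fin.ext (by simp [idxXi]; omega)
      · rw [dif_neg h0, dif_neg h1]
        exact Fin.ext (by simp [idxF]; omega)

@[simp] lemma bigEquiv_inl (m f : ℕ) (x : Fin 1) : bigEquiv m f (Sum.inl x) = idxH m f := rfl
@[simp] lemma bigEquiv_inr_inl (m f : ℕ) (i : Fin (2 * m)) :
    bigEquiv m f (Sum.inr (Sum.inl i)) = idxXi m f i := rfl
@[simp] lemma bigEquiv_inr_inr (m f : ℕ) (α : Fin f) :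
    bigEquiv m f (Sum.inr (Sum.inr α)) = idxF m f α := rfl

lemma nXH (m f : ℕ) (l : Fin (2 * m)) : idxXi m f l ≠ idxH m f := by
  simp [idxXi, idxH, Fin.ext_iff]
lemma nHXi (m f : ℕ) (l : Fin (2 * m)) : idxH m f ≠ idxXi m f l := (nXH m f l).symm
lemma nFH (m f : ℕ) (α : Fin f) : idxF m f α ≠ idxH m f := by
  simp [idxF, idxH, Fin.ext_iff]
lemma nHF (m f : ℕ) (α : Fin f) : idxH m f ≠ idxF m f α := (nFH m f α).symm
lemma nXF (m f : ℕ) (l : Fin (2 * m)) (α : Fin f) : idxXi m f l ≠ idxF m f α := by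
  simp [idxXi, idxF, Fin.ext_iff]; have := l.isLt; omega
lemma nFX (m f : ℕ) (l : Fin (2 * m)) (α : Fin f) : idxF m f α ≠ idxXi m f l :=
  (nXF m f l α).symm
lemma iXi (m f : ℕ) (l l' : Fin (2 * m)) : idxXi m f l = idxXi m f l' ↔ l = l' := by
  simp [idxXi, Fin.ext_iff]
lemma iF (m f : ℕ) (α β : Fin f) : idxF m f α = idxF m f β ↔ α = β := by
  simp [idxF, Fin.ext_iff]

/-- The characteristic matrix in block form over `Fin 1 ⊕ (Fin (2m) ⊕ Fin f)`. -/
noncomputable def hbM (m f : ℕ) (a : Fin f → ℂ) (X : Fin f → Matrix (Fin (2 * m)) (Fin (2 * m)) ℂ)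
    (r : Fin f → Fin f → ℂ) :
    Matrix (Fin 1 ⊕ (Fin (2 * m) ⊕ Fin f)) (Fin 1 ⊕ (Fin (2 * m) ⊕ Fin f))
      (MvPolynomial (Fin (2 * m + 1 + f + 1)) ℂ) :=
  Matrix.fromBlocks
    (Matrix.of fun _ _ => MvPolynomial.X 0 +
      ∑ α : Fin f, MvPolynomial.C (2 * a α) * MvPolynomial.X (idxF m f α).succ)
    (Matrix.of fun _ j => Sum.elim
      (fun j => ∑ l : Fin (2 * m),
        MvPolynomial.C (symplJ m l j) * MvPolynomial.X (idxXi m f l).succ)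
      (fun β => MvPolynomial.C (-(2 * a β)) * MvPolynomial.X (idxH m f).succ +
        ∑ α : Fin f, MvPolynomial.C (r α β) * MvPolynomial.X (idxF m f α).succ) j)
    0
    (Matrix.fromBlocks
      ((MvPolynomial.X 0 : MvPolynomial (Fin (2 * m + 1 + f + 1)) ℂ) •
          (1 : Matrix (Fin (2 * m)) (Fin (2 * m)) (MvPolynomial (Fin (2 * m + 1 + f + 1)) ℂ)) +
        ∑ α : Fin f,
          (MvPolynomial.X (idxF m f α).succ : MvPolynomial (Fin (2 * m + 1 + f + 1)) ℂ) •
            ((a α • (1 : Matrix (Fin (2 * m)) (Fin (2 * m)) ℂ) + X α).map (MvPolynomial.C)))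
      (Matrix.of fun i β => ∑ l : Fin (2 * m),
        MvPolynomial.C (-((a β • (1 : Matrix (Fin (2 * m)) (Fin (2 * m)) ℂ) + X β) i l)) *
          MvPolynomial.X (idxXi m f l).succ)
      0
      ((MvPolynomial.X 0 : MvPolynomial (Fin (2 * m + 1 + f + 1)) ℂ) • 1))

lemma hbM_det (m f : ℕ) (a : Fin f → ℂ) (X : Fin f → Matrix (Fin (2 * m)) (Fin (2 * m)) ℂ)
    (r : Fin f → Fin f → ℂ) :
    (hbM m f a X r).det =
      (MvPolynomial.X 0 : MvPolynomial (Fin (2 * m + 1 + f + 1)) ℂ) ^ f *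
        (MvPolynomial.X 0 +
          ∑ α : Fin f, MvPolynomial.C (2 * a α) * MvPolynomial.X (idxF m f α).succ) *
        Matrix.det
          ((MvPolynomial.X 0 : MvPolynomial (Fin (2 * m + 1 + f + 1)) ℂ) •
              (1 : Matrix (Fin (2 * m)) (Fin (2 * m)) (MvPolynomial (Fin (2 * m + 1 + f + 1)) ℂ)) +
            ∑ α : Fin f,
              (MvPolynomial.X (idxF m f α).succ : MvPolynomial (Fin (2 * m + 1 + f + 1)) ℂ) •
                ((a α • (1 : Matrix (Fin (2 * m)) (Fin (2 * m)) ℂ) + X α).map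
                  (MvPolynomial.C))) := by
  rw [hbM, Matrix.det_fromBlocks_zero₂₁, Matrix.det_fromBlocks_zero₂₁, Matrix.det_fin_one,
    Matrix.det_smul, Matrix.det_one, Matrix.of_apply]
  simp only [Fintype.card_fin]
  ring

/-- For a solvable complex Lie algebra `𝔰` in the canonical form for a
Heisenberg nilradical `𝔥(m)` with `f`-dimensional extension, the characteristic polynomial is
`Q_𝔰 = z₀^f · (z₀ + Σ_α 2 a_α z_{f_α}) · det (z₀ I_{2m} + Σ_α z_{f_α} (a_α I_{2m} + X_α))`. -/
theorem heisenberg_lieCharPoly_eq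
    (m f : ℕ) (hm : 1 ≤ m) (hf : 1 ≤ f)
    (𝔰 : Type) [LieRing 𝔰] [LieAlgebra ℂ 𝔰] [LieAlgebra.IsSolvable 𝔰]
    (b : Module.Basis (Fin (2 * m + 1 + f)) ℂ 𝔰)
    (a : Fin f → ℂ) (X : Fin f → Matrix (Fin (2 * m)) (Fin (2 * m)) ℂ)
    (r : Fin f → Fin f → ℂ)
    (hpq : ∀ i j : Fin m,
      ⁅b (idxP m f i), b (idxQ m f j)⁆ = if i = j then b (idxH m f) else 0)
    (hpp : ∀ i j : Fin m, ⁅b (idxP m f i), b (idxP m f j)⁆ = 0)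
    (hqq : ∀ i j : Fin m, ⁅b (idxQ m f i), b (idxQ m f j)⁆ = 0)
    (hhp : ∀ i : Fin m, ⁅b (idxH m f), b (idxP m f i)⁆ = 0)
    (hhq : ∀ i : Fin m, ⁅b (idxH m f), b (idxQ m f i)⁆ = 0)
    (hfh : ∀ α : Fin f, ⁅b (idxF m f α), b (idxH m f)⁆ = (2 * a α) • b (idxH m f))
    (hfxi : ∀ (α : Fin f) (i : Fin (2 * m)),
      ⁅b (idxF m f α), b (idxXi m f i)⁆ =
        ∑ j : Fin (2 * m),
          ((a α • (1 : Matrix (Fin (2 * m)) (Fin (2 * m)) ℂ) + X α) j i) • b (idxXi m f j))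
    (hff : ∀ α β : Fin f, ⁅b (idxF m f α), b (idxF m f β)⁆ = r α β • b (idxH m f))
    (hskew : ∀ α β : Fin f, r β α = - r α β)
    (hsp : ∀ α : Fin f, (X α).transpose * symplJ m + symplJ m * X α = 0)
    (hcomm : ∀ α β : Fin f, X α * X β = X β * X α) :
    lieCharPoly (2 * m + 1 + f) 𝔰 b =
      (MvPolynomial.X 0 : MvPolynomial (Fin (2 * m + 1 + f + 1)) ℂ) ^ f *
        (MvPolynomial.X 0 +
          ∑ α : Fin f, MvPolynomial.C (2 * a α) * MvPolynomial.X (idxF m f α).succ) *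
        Matrix.det
          ((MvPolynomial.X 0 : MvPolynomial (Fin (2 * m + 1 + f + 1)) ℂ) •
              (1 : Matrix (Fin (2 * m)) (Fin (2 * m)) (MvPolynomial (Fin (2 * m + 1 + f + 1)) ℂ)) +
            ∑ α : Fin f,
              (MvPolynomial.X (idxF m f α).succ : MvPolynomial (Fin (2 * m + 1 + f + 1)) ℂ) •
                ((a α • (1 : Matrix (Fin (2 * m)) (Fin (2 * m)) ℂ) + X α).map
                  (MvPolynomial.C))) := by
  classical
  -- index conversion lemmas
  have hPco : ∀ (i : Fin (2 * m)) (h : i.val < m), idxXi m f i = idxP m f ⟨i.val, h⟩ := by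
    intro i h; rfl
  have hQco : ∀ (i : Fin (2 * m)) (h : m ≤ i.val),
      idxXi m f i = idxQ m f ⟨i.val - m, by have := i.isLt; omega⟩ := by
    intro i h
    apply Fin.ext; simp [idxXi, idxQ]; omega
  -- derived bracket lemmas
  have lhxi : ∀ i : Fin (2 * m), ⁅b (idxH m f), b (idxXi m f i)⁆ = 0 := by
    intro i
    rcases Nat.lt_or_ge i.val m with hi | hi
    · rw [hPco i hi]; exact hhp _
    · rw [hQco i hi]; exact hhq _
  have lxih : ∀ i : Fin (2 * m), ⁅b (idxXi m f i), b (idxH m f)⁆ = 0 := by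
    intro i; rw [← lie_skew, lhxi, neg_zero]
  have lhf : ∀ α : Fin f, ⁅b (idxH m f), b (idxF m f α)⁆ = (-(2 * a α)) • b (idxH m f) := by
    intro α; rw [← lie_skew, hfh, neg_smul]
  have lxif : ∀ (i : Fin (2 * m)) (α : Fin f),
      ⁅b (idxXi m f i), b (idxF m f α)⁆ =
        ∑ j : Fin (2 * m),
          (-((a α • (1 : Matrix (Fin (2 * m)) (Fin (2 * m)) ℂ) + X α) j i)) •
            b (idxXi m f j) := by
    intro i α
    rw [← lie_skew, hfxi, ← Finset.sum_neg_distrib]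
    exact Finset.sum_congr rfl fun j _ => (neg_smul _ _).symm
  have lxixi : ∀ i j : Fin (2 * m),
      ⁅b (idxXi m f i), b (idxXi m f j)⁆ = symplJ m i j • b (idxH m f) := by
    intro i j
    rcases Nat.lt_or_ge i.val m with hi | hi <;> rcases Nat.lt_or_ge j.val m with hj | hj
    · rw [hPco i hi, hPco j hj, hpp]
      suffices h : symplJ m i j = 0 by rw [h, zero_smul]
      simp only [symplJ, Matrix.of_apply]
      rw [if_neg (by omega), if_neg (by omega)]
    · rw [hPco i hi, hQco j hj, hpq]
      split_ifs with hij
      · have hj' : j.val = i.val + m := by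
          have := congrArg Fin.val hij; simp at this; omega
        suffices h : symplJ m i j = 1 by rw [h, one_smul]
        simp only [symplJ, Matrix.of_apply]
        rw [if_pos ⟨hi, hj'⟩]
      · have hj' : ¬ (i.val = j.val - m) := by
          simpa [Fin.ext_iff] using hij
        suffices h : symplJ m i j = 0 by rw [h, zero_smul]
        simp only [symplJ, Matrix.of_apply]
        rw [if_neg (by omega), if_neg (by omega)]
    · rw [hQco i hi, hPco j hj, ← lie_skew, hpq]
      split_ifs with hij
      · have hi' : i.val = j.val + m := by
          have := congrArg Fin.val hij; simp at this; omega
        suffices h : symplJ m i j = -1 by rw [h, neg_smul, one_smul]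
        simp only [symplJ, Matrix.of_apply]
        rw [if_neg (by omega), if_pos ⟨hj, hi'⟩]
      · have hi' : ¬ (j.val = i.val - m) := by
          simpa [Fin.ext_iff] using hij
        suffices h : symplJ m i j = 0 by rw [h, zero_smul, neg_zero]
        simp only [symplJ, Matrix.of_apply]
        rw [if_neg (by omega), if_neg (by omega)]
    · rw [hQco i hi, hQco j hj, hqq]
      suffices h : symplJ m i j = 0 by rw [h, zero_smul]
      simp only [symplJ, Matrix.of_apply]
      rw [if_neg (by omega), if_neg (by omega)]
  -- repr lemmas
  have rzero : ∀ i : Fin (2 * m + 1 + f), (b.repr (0 : 𝔰)) i = 0 := by simp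
  have rH : ∀ (i : Fin (2 * m + 1 + f)) (c : ℂ),
      (b.repr (c • b (idxH m f))) i = if idxH m f = i then c else 0 := by
    intro i c
    rw [map_smul, Finsupp.smul_apply, Module.Basis.repr_self_apply, smul_eq_mul]
    split_ifs <;> simp
  have rXiSum : ∀ (i : Fin (2 * m + 1 + f)) (c : Fin (2 * m) → ℂ),
      (b.repr (∑ j : Fin (2 * m), c j • b (idxXi m f j))) i =
        ∑ j : Fin (2 * m), if idxXi m f j = i then c j else 0 := by
    intro i c
    rw [map_sum, Finset.sum_apply']
    refine Finset.sum_congr rfl fun j _ => ?_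
    rw [map_smul, Finsupp.smul_apply, Module.Basis.repr_self_apply, smul_eq_mul]
    split_ifs <;> simp
  -- splitting sums over the basis indices
  have sum_split : ∀ g : Fin (2 * m + 1 + f) → MvPolynomial (Fin (2 * m + 1 + f + 1)) ℂ,
      ∑ k, g k = g (idxH m f) +
        (∑ i : Fin (2 * m), g (idxXi m f i) + ∑ α : Fin f, g (idxF m f α)) := by
    intro g
    rw [← Equiv.sum_comp (bigEquiv m f) g, Fintype.sum_sum_type, Fintype.sum_sum_type,
      Fin.sum_univ_one]
    rfl
  have mulC_comm : ∀ (c : ℂ) (n : Fin (2 * m + 1 + f + 1)),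
      (MvPolynomial.X n : MvPolynomial (Fin (2 * m + 1 + f + 1)) ℂ) * MvPolynomial.C c =
        MvPolynomial.C c * MvPolynomial.X n := fun _ _ => mul_comm _ _
  have key : lieCharPoly (2 * m + 1 + f) 𝔰 b = (hbM m f a X r).det := by
    rw [lieCharPoly, ← Matrix.det_reindex_self (bigEquiv m f) (hbM m f a X r)]
    congr 1
    ext i j
    rw [Matrix.reindex_apply, Matrix.submatrix_apply]
    obtain ⟨s, rfl⟩ : ∃ s, bigEquiv m f s = i := ⟨_, (bigEquiv m f).apply_symm_apply i⟩
    obtain ⟨t, rfl⟩ : ∃ t, bigEquiv m f t = j := ⟨_, (bigEquiv m f).apply_symm_apply j⟩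
    rw [Equiv.symm_apply_apply, Equiv.symm_apply_apply, Matrix.add_apply, Matrix.smul_apply,
      Matrix.one_apply, smul_eq_mul, Matrix.sum_apply]
    simp only [Matrix.smul_apply, Matrix.map_apply, LinearMap.toMatrix_apply,
      LieAlgebra.ad_apply, smul_eq_mul]
    rw [sum_split]
    rcases s with x | i | γ <;> rcases t with y | j | β <;>
      simp only [bigEquiv_inl, bigEquiv_inr_inl, bigEquiv_inr_inr, lie_self, lhxi, lxih, lhf,
        lxixi, lxif, hfh, hfxi, hff, rH, rXiSum, rzero, nXH, nHXi, nFH, nHF, nXF, nFX, iXi, iF,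
        if_true, if_false, eq_self_iff_true, Finset.mem_univ, Finset.sum_ite_eq,
        Finset.sum_ite_eq', MvPolynomial.C_0, mul_zero, zero_mul, mul_one, one_mul, mul_ite,
        ite_mul, Finset.sum_const_zero, add_zero, zero_add, mulC_comm, hbM,
        Matrix.fromBlocks_apply₁₁, Matrix.fromBlocks_apply₁₂, Matrix.fromBlocks_apply₂₁,
        Matrix.fromBlocks_apply₂₂, Matrix.of_apply, Sum.elim_inl, Sum.elim_inr,
        Matrix.zero_apply, Matrix.add_apply, Matrix.smul_apply, Matrix.sum_apply,
        Matrix.one_apply, Matrix.map_apply, smul_eq_mul]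
  rw [key, hbM_det]
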